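/- For every δ ∈ (0,1) and p ∈ [1,∞] there exists C > 0 such that for every dyadic number N and every f ∈ L^p(ℝ²), the commutator satisfies ‖[Δ_N, ⟨·⟩^δ] f‖_{L^p} = ‖Δ_N(⟨·⟩^δ f) − ⟨·⟩^δ Δ_N f‖_{L^p} ≤ C N^{-1} ‖f‖_{L^p}. -/

import Mathlib

noncomputable section

open MeasureTheory Complex SchwartzMap
open scoped ENNReal NNReal FourierTransform SchwartzMap

abbrev R2 : Type := EuclideanSpace ℝ (Fin 2)

/-- Japanese bracket `⟨x⟩ = (1+|x|²)^{1/2}`. -/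
def jap (x : R2) : ℝ := Real.sqrt (1 + ‖x‖ ^ 2)

/-- Weighted `L^p` norm `‖⟨·⟩^μ f‖_{L^p}`. -/
def wLp {E : Type*} [NormedAddCommGroup E] (p : ℝ≥0∞) (μ : ℝ) (f : R2 → E) : ℝ≥0∞ :=
  eLpNorm (fun x => jap x ^ μ * ‖f x‖) p volume

/-- Dyadic numbers `1/2, 1, 2, 4, …` indexed by `ℕ`. -/
def dy (n : ℕ) : ℝ := if n = 0 then 1 / 2 else 2 ^ (n - 1)

/-- Littlewood–Paley block `Δ_N f`. -/
def LP {E : Type*} [NormedAddCommGroup E] [NormedSpace ℝ E] [NormedSpace ℂ E]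
    (K L : R2 → ℂ) (n : ℕ) (f : R2 → E) : R2 → E := fun x =>
  if n = 0 then ∫ y, L (x - y) • f y
  else ∫ y, (dy n ^ 2 : ℝ) • (K (dy n • (x - y)) • f y)

/-- LP-based weighted Sobolev norm `‖f‖_{H^α_μ} = (Σ_N N^{2α} ‖Δ_N f‖²_{L²_μ})^{1/2}`. -/
def wSobLP (K L : R2 → ℂ) (α μ : ℝ) (f : R2 → ℂ) : ℝ≥0∞ :=
  (∑' n : ℕ, ENNReal.ofReal (dy n ^ (2 * α)) * wLp 2 μ (LP K L n f) ^ 2) ^ (1 / 2 : ℝ)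

/-- Weighted Hölder–Zygmund norm `‖f‖_{C^α_μ} = sup_N N^α ‖Δ_N f‖_{L^∞_μ}`. -/
def wHold (K L : R2 → ℂ) (α μ : ℝ) (f : R2 → ℂ) : ℝ≥0∞ :=
  ⨆ n : ℕ, ENNReal.ofReal (dy n ^ α) * wLp ⊤ μ (LP K L n f)

/-- `K, L` are Schwartz kernels of a Littlewood–Paley partition of unity:
`𝓕 K` is supported in the annulus `{1/2 ≤ |ξ| ≤ 2}`, `𝓕 L` in the ball `{|ξ| < 1}`,
and `Id = Σ_{N dyadic} Δ_N`. -/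
structure IsLP (K L : 𝓢(R2, ℂ)) : Prop where
  suppK : Function.support (𝓕 ⇑K) ⊆ {ξ : R2 | 1 / 2 ≤ ‖ξ‖ ∧ ‖ξ‖ ≤ 2}
  suppL : Function.support (𝓕 ⇑L) ⊆ {ξ : R2 | ‖ξ‖ < 1}
  partition : ∀ (f : 𝓢(R2, ℂ)) (x : R2), HasSum (fun n => LP ⇑K ⇑L n ⇑f x) (f x)

namespace LPaux

lemma lint_shift (w : R2 → ℝ≥0∞) (hw : Measurable w) (x : R2) :
    ∫⁻ y, w (x - y) ∂(volume : Measure R2) = ∫⁻ y, w y ∂volume := by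
  have h2 : ∫⁻ y, w (x + (-y)) ∂(volume : Measure R2) = ∫⁻ y, w (x + y) ∂volume :=
    (Measure.measurePreserving_neg (volume : Measure R2)).lintegral_comp
      (hw.comp (measurable_const_add x))
  simp only [← sub_eq_add_neg] at h2
  rw [h2, lintegral_add_left_eq_self w x]

lemma key_fubini (w : R2 → ℝ≥0∞) (hw : Measurable w) (G : R2 → ℝ≥0∞) (hG : Measurable G) :
    ∫⁻ x, ∫⁻ y, w (x - y) * G y ∂volume ∂(volume : Measure R2)
      = (∫⁻ z, w z ∂volume) * ∫⁻ y, G y ∂volume := by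
  have hm : Measurable (Function.uncurry fun x y : R2 => w (x - y) * G y) :=
    (hw.comp (measurable_fst.sub measurable_snd)).mul (hG.comp measurable_snd)
  rw [lintegral_lintegral_swap hm.aemeasurable]
  have h1 : ∀ y : R2, ∫⁻ x, w (x - y) * G y ∂(volume : Measure R2)
      = (∫⁻ z, w z ∂volume) * G y := by
    intro y
    have hm2 : Measurable fun x : R2 => w (x - y) := hw.comp (measurable_id.sub measurable_const)
    rw [lintegral_mul_const _ hm2, lintegral_sub_right_eq_self w y]
  simp only [h1]
  rw [lintegral_const_mul _ hG]


lemma young_lintegral (w : R2 → ℝ≥0∞) (hw : Measurable w) (F : R2 → ℝ≥0∞)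
    (hF : Measurable F) {q : ℝ} (hq : 1 ≤ q) :
    ∫⁻ x, (∫⁻ y, w (x - y) * F y ∂volume) ^ q ∂(volume : Measure R2)
      ≤ (∫⁻ z, w z ∂volume) ^ q * ∫⁻ y, F y ^ q ∂volume := by
  set I := ∫⁻ z, w z ∂(volume : Measure R2) with hIdef
  rcases eq_or_lt_of_le hq with h1 | h1
  · simp only [← h1, ENNReal.rpow_one]
    exact le_of_eq (key_fubini w hw F hF)
  · have hq0 : 0 < q := lt_of_lt_of_le one_pos hq
    set r := Real.conjExponent q with hrdef
    have hcon : r.HolderConjugate q := (Real.HolderConjugate.conjExponent h1).symm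
    have hr0 : 0 < r := hcon.pos
    have hsum : 1 / r + 1 / q = 1 := by
      rw [one_div, one_div, hcon.inv_add_inv_eq_one]
    have hFq : Measurable fun y => F y ^ q := hF.pow measurable_const
    have hS : Measurable fun x : R2 => ∫⁻ y, w (x - y) * F y ^ q ∂volume := by
      apply Measurable.lintegral_prod_right'
        (f := fun z : R2 × R2 => w (z.1 - z.2) * F z.2 ^ q)
      exact (hw.comp (measurable_fst.sub measurable_snd)).mul (hFq.comp measurable_snd)
    have hx : ∀ x : R2, (∫⁻ y, w (x - y) * F y ∂volume)
        ≤ I ^ (1 / r) * (∫⁻ y, w (x - y) * F y ^ q ∂volume) ^ (1 / q) := by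
      intro x
      have hwx : Measurable fun y : R2 => w (x - y) :=
        hw.comp (measurable_const.sub measurable_id)
      have h := ENNReal.lintegral_mul_le_Lp_mul_Lq (volume : Measure R2) hcon
        (f := fun y => w (x - y) ^ (1 / r))
        (g := fun y => w (x - y) ^ (1 / q) * F y)
        ((hwx.pow measurable_const).aemeasurable)
        (((hwx.pow measurable_const).mul hF).aemeasurable)
      have e1 : ∀ y : R2, ((fun y => w (x - y) ^ (1 / r)) * fun y => w (x - y) ^ (1 / q) * F y) y
          = w (x - y) * F y := by
        intro y
        simp only [Pi.mul_apply]
        rw [← mul_assoc, ← ENNReal.rpow_add_of_nonneg _ _ (by positivity) (by positivity),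
          hsum, ENNReal.rpow_one]
      have e2 : ∫⁻ y, (w (x - y) ^ (1 / r)) ^ r ∂(volume : Measure R2) = I := by
        have : ∀ y : R2, (w (x - y) ^ (1 / r)) ^ r = w (x - y) := by
          intro y
          rw [← ENNReal.rpow_mul, one_div, inv_mul_cancel₀ hr0.ne', ENNReal.rpow_one]
        simp only [this]
        exact lint_shift w hw x
      have e3 : ∀ y : R2, (w (x - y) ^ (1 / q) * F y) ^ q = w (x - y) * F y ^ q := by
        intro y
        rw [ENNReal.mul_rpow_of_nonneg _ _ hq0.le, ← ENNReal.rpow_mul, one_div,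
          inv_mul_cancel₀ hq0.ne', ENNReal.rpow_one]
      simp only [e1, e2, e3] at h
      exact h
    have step1 : ∫⁻ x, (∫⁻ y, w (x - y) * F y ∂volume) ^ q ∂(volume : Measure R2)
        ≤ ∫⁻ x, (I ^ (1 / r) * (∫⁻ y, w (x - y) * F y ^ q ∂volume) ^ (1 / q)) ^ q
            ∂(volume : Measure R2) :=
      lintegral_mono fun x => ENNReal.rpow_le_rpow (hx x) hq0.le
    have step2 : ∀ x : R2, (I ^ (1 / r) * (∫⁻ y, w (x - y) * F y ^ q ∂volume) ^ (1 / q)) ^ q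
        = I ^ (q / r) * (∫⁻ y, w (x - y) * F y ^ q ∂volume) := by
      intro x
      rw [ENNReal.mul_rpow_of_nonneg _ _ hq0.le, ← ENNReal.rpow_mul, ← ENNReal.rpow_mul,
        (show 1 / r * q = q / r by ring), (show 1 / q * q = 1 by field_simp),
        ENNReal.rpow_one]
    have step3 : ∫⁻ x, I ^ (q / r) * (∫⁻ y, w (x - y) * F y ^ q ∂volume)
          ∂(volume : Measure R2)
        = I ^ (q / r) * (I * ∫⁻ y, F y ^ q ∂volume) := by
      rw [lintegral_const_mul _ hS, key_fubini w hw _ hFq]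
    have hqr : q / r + 1 = q := by
      have h2 := hcon.inv_add_inv_eq_one
      field_simp at h2 ⊢
      nlinarith [hcon.symm.sub_one_pos]
    have step4 : I ^ (q / r) * (I * ∫⁻ y, F y ^ q ∂volume) = I ^ q * ∫⁻ y, F y ^ q ∂volume := by
      rw [← mul_assoc]
      congr 1
      have e : I ^ (q / r) * I = I ^ (q / r) * I ^ (1 : ℝ) := by rw [ENNReal.rpow_one]
      rw [e, ← ENNReal.rpow_add_of_nonneg _ _ (by positivity) zero_le_one, hqr]
    calc ∫⁻ x, (∫⁻ y, w (x - y) * F y ∂volume) ^ q ∂(volume : Measure R2)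
        ≤ ∫⁻ x, (I ^ (1 / r) * (∫⁻ y, w (x - y) * F y ^ q ∂volume) ^ (1 / q)) ^ q
            ∂(volume : Measure R2) := step1
      _ = I ^ (q / r) * (I * ∫⁻ y, F y ^ q ∂volume) := by
          simp only [step2]; exact step3
      _ = I ^ q * ∫⁻ y, F y ^ q ∂volume := step4


lemma conv_le_top (w : R2 → ℝ≥0∞) (hw : Measurable w) (f : R2 → ℂ) (x : R2) :
    ∫⁻ y, w (x - y) * ‖f y‖₊ ∂(volume : Measure R2)
      ≤ (∫⁻ z, w z ∂volume) * eLpNormEssSup f volume := by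
  have hwx : Measurable fun y : R2 => w (x - y) :=
    hw.comp (measurable_const.sub measurable_id)
  calc ∫⁻ y, w (x - y) * ‖f y‖₊ ∂(volume : Measure R2)
      ≤ ∫⁻ y, w (x - y) * eLpNormEssSup f volume ∂volume := by
        refine lintegral_mono_ae ?_
        filter_upwards [enorm_ae_le_eLpNormEssSup f volume] with y hy
        exact mul_le_mul_right hy _
    _ = (∫⁻ z, w z ∂volume) * eLpNormEssSup f volume := by
        rw [lintegral_mul_const _ hwx, lint_shift w hw x]

lemma young_bound (w : R2 → ℝ≥0∞) (hw : Measurable w) {p : ℝ≥0∞} (hp : 1 ≤ p)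
    {f : R2 → ℂ} (hf : AEStronglyMeasurable f volume)
    {h : R2 → ℂ} (hb : ∀ᵐ x ∂(volume : Measure R2),
      (‖h x‖₊ : ℝ≥0∞) ≤ ∫⁻ y, w (x - y) * ‖f y‖₊ ∂volume) :
    eLpNorm h p volume ≤ (∫⁻ z, w z ∂volume) * eLpNorm f p volume := by
  set I := ∫⁻ z, w z ∂(volume : Measure R2) with hIdef
  by_cases hptop : p = ∞
  · subst hptop
    rw [eLpNorm_exponent_top, eLpNorm_exponent_top]
    refine essSup_le_of_ae_le _ ?_
    filter_upwards [hb] with x hx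
    exact hx.trans (conv_le_top w hw f x)
  · have hp0 : p ≠ 0 := (lt_of_lt_of_le one_pos hp).ne'
    set q := p.toReal with hqdef
    have hq1 : 1 ≤ q := by
      have := ENNReal.toReal_mono hptop hp
      simpa using this
    have hq0 : 0 < q := lt_of_lt_of_le one_pos hq1
    obtain ⟨F, hFm, hFe⟩ : ∃ F : R2 → ℝ≥0∞,
        Measurable F ∧ (fun y => (‖f y‖₊ : ℝ≥0∞)) =ᵐ[volume] F :=
      ⟨hf.aemeasurable.enorm.mk _, hf.aemeasurable.enorm.measurable_mk, hf.aemeasurable.enorm.ae_eq_mk⟩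
    have hTx : ∀ x : R2, ∫⁻ y, w (x - y) * ‖f y‖₊ ∂(volume : Measure R2)
        = ∫⁻ y, w (x - y) * F y ∂volume := fun x =>
      lintegral_congr_ae (hFe.mono fun y hy => by dsimp only at hy ⊢; rw [hy])
    rw [eLpNorm_eq_lintegral_rpow_enorm_toReal hp0 hptop,
      eLpNorm_eq_lintegral_rpow_enorm_toReal hp0 hptop]
    have h1 : ∫⁻ x, (‖h x‖₊ : ℝ≥0∞) ^ q ∂(volume : Measure R2)
        ≤ ∫⁻ x, (∫⁻ y, w (x - y) * F y ∂volume) ^ q ∂volume := by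
      refine lintegral_mono_ae ?_
      filter_upwards [hb] with x hx
      exact ENNReal.rpow_le_rpow (hx.trans (le_of_eq (hTx x))) hq0.le
    have h2 := young_lintegral w hw F hFm hq1
    have h3 : ∫⁻ y, F y ^ q ∂(volume : Measure R2)
        = ∫⁻ y, (‖f y‖₊ : ℝ≥0∞) ^ q ∂volume :=
      lintegral_congr_ae (hFe.mono fun y hy => by dsimp only at hy ⊢; rw [hy])
    calc (∫⁻ x, (‖h x‖₊ : ℝ≥0∞) ^ q ∂(volume : Measure R2)) ^ (1 / q)
        ≤ (I ^ q * ∫⁻ y, (‖f y‖₊ : ℝ≥0∞) ^ q ∂volume) ^ (1 / q) := by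
          refine ENNReal.rpow_le_rpow ?_ (by positivity)
          exact h1.trans (h2.trans_eq (by rw [h3]))
      _ = I * (∫⁻ y, (‖f y‖₊ : ℝ≥0∞) ^ q ∂volume) ^ (1 / q) := by
          rw [ENNReal.mul_rpow_of_nonneg _ _ (by positivity), ← ENNReal.rpow_mul,
            mul_one_div, div_self hq0.ne', ENNReal.rpow_one]

lemma conv_finite_ae (w : R2 → ℝ≥0∞) (hw : Measurable w)
    (hI : ∫⁻ z, w z ∂(volume : Measure R2) ≠ ∞)
    {p : ℝ≥0∞} (hp : 1 ≤ p) {f : R2 → ℂ} (hf : MemLp f p volume) :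
    ∀ᵐ x ∂(volume : Measure R2), ∫⁻ y, w (x - y) * ‖f y‖₊ ∂volume < ∞ := by
  by_cases hptop : p = ∞
  · refine Filter.Eventually.of_forall fun x => lt_of_le_of_lt (conv_le_top w hw f x) ?_
    refine ENNReal.mul_lt_top hI.lt_top ?_
    have := hf.2
    rw [hptop, eLpNorm_exponent_top] at this
    exact this
  · have hp0 : p ≠ 0 := (lt_of_lt_of_le one_pos hp).ne'
    set q := p.toReal with hqdef
    have hq1 : 1 ≤ q := by
      have := ENNReal.toReal_mono hptop hp
      simpa using this
    have hq0 : 0 < q := lt_of_lt_of_le one_pos hq1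
    obtain ⟨F, hFm, hFe⟩ : ∃ F : R2 → ℝ≥0∞,
        Measurable F ∧ (fun y => (‖f y‖₊ : ℝ≥0∞)) =ᵐ[volume] F :=
      ⟨hf.1.aemeasurable.enorm.mk _, hf.1.aemeasurable.enorm.measurable_mk, hf.1.aemeasurable.enorm.ae_eq_mk⟩
    have hTx : ∀ x : R2, ∫⁻ y, w (x - y) * ‖f y‖₊ ∂(volume : Measure R2)
        = ∫⁻ y, w (x - y) * F y ∂volume := fun x =>
      lintegral_congr_ae (hFe.mono fun y hy => by dsimp only at hy ⊢; rw [hy])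
    have hT : Measurable fun x : R2 => ∫⁻ y, w (x - y) * F y ∂volume := by
      apply Measurable.lintegral_prod_right'
        (f := fun z : R2 × R2 => w (z.1 - z.2) * F z.2)
      exact (hw.comp (measurable_fst.sub measurable_snd)).mul (hFm.comp measurable_snd)
    have hfq : ∫⁻ y, F y ^ q ∂(volume : Measure R2) ≠ ∞ := by
      have h3 : ∫⁻ y, F y ^ q ∂(volume : Measure R2)
          = ∫⁻ y, (‖f y‖₊ : ℝ≥0∞) ^ q ∂volume :=
        lintegral_congr_ae (hFe.mono fun y hy => by dsimp only at hy ⊢; rw [hy])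
      rw [h3]
      intro hcontra
      have := hf.2
      rw [eLpNorm_eq_lintegral_rpow_enorm_toReal hp0 hptop, ← hqdef] at this
      change (∫⁻ y, (‖f y‖₊ : ℝ≥0∞) ^ q ∂volume) ^ (1 / q) < ∞ at this
      rw [hcontra,
        ENNReal.top_rpow_of_pos (by positivity)] at this
      exact (lt_irrefl _ this).elim
    have hfin : ∫⁻ x, (∫⁻ y, w (x - y) * F y ∂volume) ^ q ∂(volume : Measure R2) ≠ ∞ := by
      refine ne_top_of_le_ne_top ?_ (young_lintegral w hw F hFm hq1)
      exact (ENNReal.mul_lt_top (ENNReal.rpow_lt_top_of_nonneg hq0.le hI) hfq.lt_top).ne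
    have hae := ae_lt_top (hT.pow measurable_const) hfin
    filter_upwards [hae] with x hx
    rw [hTx x]
    by_contra hcon
    rw [not_lt, top_le_iff] at hcon
    rw [hcon, ENNReal.top_rpow_of_pos hq0] at hx
    exact lt_irrefl _ hx


lemma sqrt_lip {u v : ℝ} (hu : 0 ≤ u) (hv : 0 ≤ v) :
    Real.sqrt (1 + u ^ 2) - Real.sqrt (1 + v ^ 2) ≤ |u - v| := by
  have h1 : v ≤ Real.sqrt (1 + v ^ 2) := by
    calc v = Real.sqrt (v ^ 2) := (Real.sqrt_sq hv).symm
      _ ≤ Real.sqrt (1 + v ^ 2) := Real.sqrt_le_sqrt (by linarith)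
  have h2 : (0:ℝ) ≤ Real.sqrt (1 + v ^ 2) := Real.sqrt_nonneg _
  have h3 : u - v ≤ |u - v| := le_abs_self _
  have h4 : (0:ℝ) ≤ |u - v| := abs_nonneg _
  have h5 : 1 + u ^ 2 ≤ (|u - v| + Real.sqrt (1 + v ^ 2)) ^ 2 := by
    have hs : Real.sqrt (1 + v ^ 2) ^ 2 = 1 + v ^ 2 := Real.sq_sqrt (by positivity)
    nlinarith [_root_.sq_abs (u - v)]
  have h6 : Real.sqrt (1 + u ^ 2) ≤ |u - v| + Real.sqrt (1 + v ^ 2) := by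
    have h7 : |u - v| + Real.sqrt (1 + v ^ 2)
        = Real.sqrt ((|u - v| + Real.sqrt (1 + v ^ 2)) ^ 2) :=
      (Real.sqrt_sq (by positivity)).symm
    rw [h7]
    exact Real.sqrt_le_sqrt h5
  linarith

lemma jap_lip (a b : R2) : |jap a - jap b| ≤ ‖a - b‖ := by
  have h1 : jap a - jap b ≤ |‖a‖ - ‖b‖| := sqrt_lip (norm_nonneg a) (norm_nonneg b)
  have h2 : jap b - jap a ≤ |‖b‖ - ‖a‖| := sqrt_lip (norm_nonneg b) (norm_nonneg a)
  rw [abs_sub_comm] at h2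
  have h3 : |‖a‖ - ‖b‖| ≤ ‖a - b‖ := abs_norm_sub_norm_le a b
  rw [abs_sub_le_iff]
  constructor <;> linarith

lemma one_le_jap (a : R2) : 1 ≤ jap a := by
  rw [show (1:ℝ) = Real.sqrt 1 by simp]
  exact Real.sqrt_le_sqrt (by nlinarith [sq_nonneg ‖a‖])

lemma rpow_lip {δ : ℝ} (hδ0 : 0 ≤ δ) (hδ1 : δ ≤ 1) {s t : ℝ} (hs : 1 ≤ s) (ht : 1 ≤ t)
    (hts : t ≤ s) : s ^ δ - t ^ δ ≤ s - t := by
  have anti : AntitoneOn (fun u : ℝ => u ^ δ - u) (Set.Ici 1) := by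
    have hderiv : ∀ u ∈ interior (Set.Ici (1:ℝ)), HasDerivAt (fun u : ℝ => u ^ δ - u)
        (δ * u ^ (δ - 1) - 1) u := by
      intro u hu
      rw [interior_Ici] at hu
      have h0 : (u:ℝ) ≠ 0 := by
        have : (1:ℝ) < u := hu
        linarith
      exact (Real.hasDerivAt_rpow_const (Or.inl h0)).sub (hasDerivAt_id u)
    refine antitoneOn_of_deriv_nonpos (convex_Ici 1) ?_ ?_ ?_
    · have : ContinuousOn (fun u : ℝ => u ^ δ) (Set.Ici 1) := by
        intro u hu
        exact (Real.continuousAt_rpow_const u δ (Or.inr hδ0)).continuousWithinAt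
      exact this.sub continuousOn_id
    · intro u hu
      exact (hderiv u hu).differentiableAt.differentiableWithinAt
    · intro u hu
      rw [(hderiv u hu).deriv]
      have hu1 : (1:ℝ) < u := by rwa [interior_Ici] at hu
      have : u ^ (δ - 1) ≤ 1 :=
        Real.rpow_le_one_of_one_le_of_nonpos hu1.le (by linarith)
      nlinarith
  have := anti (Set.mem_Ici.2 ht) (Set.mem_Ici.2 hs) hts
  dsimp at this
  linarith

lemma g_lip {δ : ℝ} (hδ0 : 0 ≤ δ) (hδ1 : δ ≤ 1) (a b : R2) :
    |jap a ^ δ - jap b ^ δ| ≤ ‖a - b‖ := by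
  have key : ∀ x y : R2, jap y ≤ jap x → jap x ^ δ - jap y ^ δ ≤ ‖x - y‖ := by
    intro x y hxy
    have := rpow_lip hδ0 hδ1 (one_le_jap x) (one_le_jap y) hxy
    have h2 : jap x - jap y ≤ ‖x - y‖ := (le_abs_self _).trans (jap_lip x y)
    linarith
  rcases le_total (jap b) (jap a) with h | h
  · rw [_root_.abs_of_nonneg (by
      have := Real.rpow_le_rpow (le_trans zero_le_one (one_le_jap b)) h hδ0
      linarith)]
    exact key a b h
  · rw [abs_of_nonpos (by
      have := Real.rpow_le_rpow (le_trans zero_le_one (one_le_jap a)) h hδ0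
      linarith)]
    have := key b a h
    rw [norm_sub_rev] at this
    linarith


lemma jap_continuous : Continuous jap := by
  have : Continuous fun x : R2 => 1 + ‖x‖ ^ 2 := by continuity
  exact Real.continuous_sqrt.comp this

lemma pointwise_bound {δ : ℝ} (hδ0 : 0 ≤ δ) (hδ1 : δ ≤ 1) (φ : R2 → ℂ) (hφ : Continuous φ)
    {f : R2 → ℂ} (hf : AEStronglyMeasurable f volume) (x : R2)
    (h1 : ∫⁻ y, ((‖φ (x - y)‖₊ : ℝ≥0∞) * ‖x - y‖₊) * ‖f y‖₊ ∂(volume : Measure R2) < ∞)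
    (h2 : ∫⁻ y, (‖φ (x - y)‖₊ : ℝ≥0∞) * ‖f y‖₊ ∂(volume : Measure R2) < ∞) :
    (‖(∫ y, φ (x - y) • ((jap y ^ δ : ℝ) • f y) ∂volume)
        - (jap x ^ δ : ℝ) • ∫ y, φ (x - y) • f y ∂volume‖₊ : ℝ≥0∞)
      ≤ ∫⁻ y, ((‖φ (x - y)‖₊ : ℝ≥0∞) * ‖x - y‖₊) * ‖f y‖₊ ∂volume := by
  set g : R2 → ℝ := fun y => jap y ^ δ with hgdef
  have hgc : Continuous g := by
    apply Continuous.rpow_const jap_continuous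
    intro y; exact Or.inr hδ0
  set a : R2 → ℂ := fun y => φ (x - y) • f y with hadef
  have hax : AEStronglyMeasurable a volume :=
    ((hφ.comp (continuous_const.sub continuous_id)).aestronglyMeasurable).smul hf
  have hnorm_a : ∀ y, (‖a y‖₊ : ℝ≥0∞) = (‖φ (x - y)‖₊ : ℝ≥0∞) * ‖f y‖₊ := by
    intro y
    rw [hadef]; rw [nnnorm_smul, ENNReal.coe_mul]
  have hint_a : Integrable a volume := by
    refine ⟨hax, ?_⟩
    have : ∫⁻ y, (‖a y‖₊ : ℝ≥0∞) ∂volume < ∞ := by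
      simp only [hnorm_a]; exact h2
    exact this
  have hDb : ∀ y, (‖(g y - g x) • a y‖₊ : ℝ≥0∞)
      ≤ ((‖φ (x - y)‖₊ : ℝ≥0∞) * ‖x - y‖₊) * ‖f y‖₊ := by
    intro y
    have hle : (‖g y - g x‖₊ : ℝ≥0∞) ≤ (‖x - y‖₊ : ℝ≥0∞) := by
      rw [ENNReal.coe_le_coe, ← NNReal.coe_le_coe, coe_nnnorm, coe_nnnorm,
        Real.norm_eq_abs]
      have := g_lip hδ0 hδ1 y x
      rwa [norm_sub_rev] at this
    calc (‖(g y - g x) • a y‖₊ : ℝ≥0∞) = (‖g y - g x‖₊ : ℝ≥0∞) * ‖a y‖₊ := by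
          rw [nnnorm_smul, ENNReal.coe_mul]
      _ ≤ (‖x - y‖₊ : ℝ≥0∞) * ((‖φ (x - y)‖₊ : ℝ≥0∞) * ‖f y‖₊) := by
          rw [hnorm_a]; exact mul_le_mul_left hle _
      _ = ((‖φ (x - y)‖₊ : ℝ≥0∞) * ‖x - y‖₊) * ‖f y‖₊ := by ring
  have hD : Integrable (fun y => (g y - g x) • a y) volume := by
    refine ⟨((hgc.sub continuous_const).aestronglyMeasurable).smul hax, ?_⟩
    have : ∫⁻ y, (‖(g y - g x) • a y‖₊ : ℝ≥0∞) ∂volume < ∞ :=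
      lt_of_le_of_lt (lintegral_mono fun y => hDb y) h1
    exact this
  have hG : Integrable (fun y => g x • a y) volume := hint_a.smul (g x)
  have hsum : (fun y => φ (x - y) • (g y • f y))
      = fun y => (g y - g x) • a y + g x • a y := by
    funext y
    rw [← smul_comm (g y) (φ (x - y)) (f y), ← add_smul, sub_add_cancel]
  have heq : ∫ y, φ (x - y) • (g y • f y) ∂volume
      = (∫ y, (g y - g x) • a y ∂volume) + g x • ∫ y, a y ∂volume := by
    rw [hsum, integral_add hD hG, integral_smul]
  have hexp : (∫ y, φ (x - y) • ((jap y ^ δ : ℝ) • f y) ∂volume)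
      - (jap x ^ δ : ℝ) • ∫ y, φ (x - y) • f y ∂volume
      = ∫ y, (g y - g x) • a y ∂volume := by
    have : (∫ y, φ (x - y) • ((jap y ^ δ : ℝ) • f y) ∂volume)
        = ∫ y, φ (x - y) • (g y • f y) ∂volume := rfl
    rw [this, heq]
    simp [hadef, hgdef]
  rw [hexp]
  refine (enorm_integral_le_lintegral_enorm _).trans ?_
  exact lintegral_mono fun y => hDb y


end LPaux

open LPaux

/-- For every `δ ∈ (0,1)` and `p ∈ [1,∞]` there exists `C > 0` such that
for every dyadic `N` and every `f ∈ L^p(ℝ²)`,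
`‖Δ_N(⟨·⟩^δ f) − ⟨·⟩^δ Δ_N f‖_{L^p} ≤ C N⁻¹ ‖f‖_{L^p}`. -/
theorem lp_weight_commutator (K L : 𝓢(R2, ℂ)) (hKL : IsLP K L)
    (δ : ℝ) (hδ : δ ∈ Set.Ioo (0 : ℝ) 1) (p : ℝ≥0∞) (hp : 1 ≤ p) :
    ∃ C : ℝ, 0 < C ∧ ∀ (n : ℕ) (f : R2 → ℂ), MemLp f p volume →
      eLpNorm (fun x => LP (⇑K) (⇑L) n (fun y => (jap y ^ δ : ℝ) • f y) x
          - (jap x ^ δ : ℝ) • LP (⇑K) (⇑L) n f x) p volume ≤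
        ENNReal.ofReal (C * (dy n)⁻¹) * eLpNorm f p volume := by
  obtain ⟨hδ0, hδ1⟩ := hδ
  classical
  set φ : ℕ → R2 → ℂ := fun n z =>
    if n = 0 then L z else (dy n ^ 2 : ℝ) • K (dy n • z) with hφdef
  have hdy : ∀ n, 0 < dy n := by
    intro n; unfold dy; split <;> positivity
  have hφc : ∀ n, Continuous (φ n) := by
    intro n
    by_cases hn : n = 0
    · simpa [hφdef, hn] using L.continuous
    · simp only [hφdef, hn, if_false]
      exact (K.continuous.comp (continuous_const_smul (dy n))).const_smul (dy n ^ 2 : ℝ)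
  have hLPeq : ∀ n (F : R2 → ℂ) (x : R2),
      LP (⇑K) (⇑L) n F x = ∫ y, φ n (x - y) • F y ∂volume := by
    intro n F x
    by_cases hn : n = 0
    · simp [LP, hn, hφdef]
    · simp only [LP, hn, if_false, hφdef]
      simp_rw [smul_assoc]
  set w : ℕ → R2 → ℝ≥0∞ := fun n z => (‖φ n z‖₊ : ℝ≥0∞) with hwdef
  set ψ : ℕ → R2 → ℝ≥0∞ := fun n z => (‖φ n z‖₊ : ℝ≥0∞) * ‖z‖₊ with hψdef
  have hwm : ∀ n, Measurable (w n) := fun n =>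
    ((hφc n).nnnorm.measurable).coe_nnreal_ennreal
  have hψm : ∀ n, Measurable (ψ n) := fun n =>
    (hwm n).mul (continuous_nnnorm.measurable.coe_nnreal_ennreal)
  have hφint : ∀ n, Integrable (φ n) volume := by
    intro n
    by_cases hn : n = 0
    · simpa [hφdef, hn] using L.integrable (μ := volume)
    · simp only [hφdef, hn, if_false]
      exact ((K.integrable (μ := volume)).comp_smul (hdy n).ne').smul (dy n ^ 2 : ℝ)
  have hwfin : ∀ n, ∫⁻ z, w n z ∂(volume : Measure R2) < ∞ := fun n => (hφint n).2
  set CK : ℝ≥0∞ := ∫⁻ z, ((‖K z‖₊ : ℝ≥0∞) * ‖z‖₊) ∂(volume : Measure R2) with hCKdef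
  set CL : ℝ≥0∞ := ∫⁻ z, ((‖L z‖₊ : ℝ≥0∞) * ‖z‖₊) ∂(volume : Measure R2) with hCLdef
  have hKfin : ∀ (M : 𝓢(R2, ℂ)), ∫⁻ z, ((‖M z‖₊ : ℝ≥0∞) * ‖z‖₊) ∂(volume : Measure R2) < ∞ := by
    intro M
    have h := (M.integrable_pow_mul (volume : Measure R2) 1).2
    have he : ∀ z : R2, ((‖M z‖₊ : ℝ≥0∞) * ‖z‖₊) = (‖(‖z‖ ^ 1 * ‖M z‖)‖₊ : ℝ≥0∞) := by
      intro z
      rw [pow_one, nnnorm_mul, nnnorm_norm, nnnorm_norm, ENNReal.coe_mul, mul_comm]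
    simp only [he]
    exact h
  have hCKfin : CK < ∞ := hKfin K
  have hCLfin : CL < ∞ := hKfin L
  have hψ0 : ∫⁻ z, ψ 0 z ∂(volume : Measure R2) = CL := by
    simp [hψdef, hφdef, hCLdef]
  have hψn : ∀ n, n ≠ 0 → ∫⁻ z, ψ n z ∂(volume : Measure R2)
      = ENNReal.ofReal (dy n)⁻¹ * CK := by
    intro n hn
    have hN : 0 < dy n := hdy n
    set N := dy n with hNdef
    have hh : Measurable fun u : R2 => ((‖K u‖₊ : ℝ≥0∞) * ‖u‖₊) :=
      ((K.continuous.nnnorm.measurable).coe_nnreal_ennreal).mul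
        (continuous_nnnorm.measurable.coe_nnreal_ennreal)
    have hpt : ∀ z : R2, ψ n z
        = ENNReal.ofReal N * ((‖K (N • z)‖₊ : ℝ≥0∞) * ‖N • z‖₊) := by
      intro z
      simp only [hψdef, hφdef, hn, if_false]
      rw [nnnorm_smul, ENNReal.coe_mul, nnnorm_smul, ENNReal.coe_mul]
      have e1 : (‖(dy n ^ 2 : ℝ)‖₊ : ℝ≥0∞) = ENNReal.ofReal N * ENNReal.ofReal N := by
        change ‖(dy n ^ 2 : ℝ)‖ₑ = _
        rw [Real.enorm_eq_ofReal (by positivity), ← ENNReal.ofReal_mul hN.le]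
        congr 1
        rw [hNdef]; ring
      have e2 : (‖(N : ℝ)‖₊ : ℝ≥0∞) = ENNReal.ofReal N := Real.enorm_eq_ofReal hN.le
      rw [e1, e2]
      ring
    calc ∫⁻ z, ψ n z ∂(volume : Measure R2)
        = ENNReal.ofReal N * ∫⁻ z, ((‖K (N • z)‖₊ : ℝ≥0∞) * ‖N • z‖₊) ∂volume := by
          simp only [hpt]
          exact lintegral_const_mul _ (hh.comp (measurable_const_smul N))
      _ = ENNReal.ofReal N * (ENNReal.ofReal |((N : ℝ) ^ Module.finrank ℝ R2)⁻¹| * CK) := by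
          congr 1
          rw [← lintegral_map hh (measurable_const_smul N),
            Measure.map_addHaar_smul (volume : Measure R2) hN.ne', lintegral_smul_measure,
            hCKdef, smul_eq_mul]
      _ = ENNReal.ofReal (dy n)⁻¹ * CK := by
          rw [← mul_assoc, ← ENNReal.ofReal_mul hN.le]
          congr 2
          rw [finrank_euclideanSpace_fin, _root_.abs_of_nonneg (by positivity : (0:ℝ) ≤ (N ^ 2)⁻¹),
            ← hNdef]
          field_simp
  refine ⟨CK.toReal + CL.toReal + 1, by positivity, ?_⟩
  intro n f hf
  have hψbound : ∫⁻ z, ψ n z ∂(volume : Measure R2)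
      ≤ ENNReal.ofReal ((CK.toReal + CL.toReal + 1) * (dy n)⁻¹) := by
    by_cases hn : n = 0
    · subst hn
      have hdy0 : ((dy 0)⁻¹ : ℝ) = 2 := by norm_num [dy]
      calc ∫⁻ z, ψ 0 z ∂(volume : Measure R2) = CL := hψ0
        _ = ENNReal.ofReal CL.toReal := (ENNReal.ofReal_toReal hCLfin.ne).symm
        _ ≤ ENNReal.ofReal ((CK.toReal + CL.toReal + 1) * (dy 0)⁻¹) := by
            apply ENNReal.ofReal_le_ofReal
            rw [hdy0]
            nlinarith [ENNReal.toReal_nonneg (a := CK), ENNReal.toReal_nonneg (a := CL)]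
    · have hinv : (0:ℝ) < (dy n)⁻¹ := inv_pos.2 (hdy n)
      calc ∫⁻ z, ψ n z ∂(volume : Measure R2)
          = ENNReal.ofReal (dy n)⁻¹ * CK := hψn n hn
        _ = ENNReal.ofReal (dy n)⁻¹ * ENNReal.ofReal CK.toReal := by
            rw [ENNReal.ofReal_toReal hCKfin.ne]
        _ = ENNReal.ofReal ((dy n)⁻¹ * CK.toReal) := by
            rw [ENNReal.ofReal_mul hinv.le]
        _ ≤ ENNReal.ofReal ((CK.toReal + CL.toReal + 1) * (dy n)⁻¹) := by
            apply ENNReal.ofReal_le_ofReal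
            nlinarith [mul_le_mul_of_nonneg_right
              (show CK.toReal ≤ CK.toReal + CL.toReal + 1 by
                nlinarith [ENNReal.toReal_nonneg (a := CL)]) hinv.le]
  have hψfin : ∫⁻ z, ψ n z ∂(volume : Measure R2) < ∞ :=
    lt_of_le_of_lt hψbound ENNReal.ofReal_lt_top
  have hae1 := conv_finite_ae (ψ n) (hψm n) hψfin.ne hp hf
  have hae2 := conv_finite_ae (w n) (hwm n) (hwfin n).ne hp hf
  have hbb : ∀ᵐ x ∂(volume : Measure R2),
      (‖LP (⇑K) (⇑L) n (fun y => (jap y ^ δ : ℝ) • f y) x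
          - (jap x ^ δ : ℝ) • LP (⇑K) (⇑L) n f x‖₊ : ℝ≥0∞)
        ≤ ∫⁻ y, ψ n (x - y) * ‖f y‖₊ ∂volume := by
    filter_upwards [hae1, hae2] with x hx1 hx2
    rw [hLPeq n _ x, hLPeq n f x]
    have hx1' : ∫⁻ y, ((‖φ n (x - y)‖₊ : ℝ≥0∞) * ‖x - y‖₊) * ‖f y‖₊
        ∂(volume : Measure R2) < ∞ := hx1
    have hx2' : ∫⁻ y, (‖φ n (x - y)‖₊ : ℝ≥0∞) * ‖f y‖₊ ∂(volume : Measure R2) < ∞ := hx2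
    exact pointwise_bound hδ0.le hδ1.le (φ n) (hφc n) hf.1 x hx1' hx2'
  calc eLpNorm (fun x => LP (⇑K) (⇑L) n (fun y => (jap y ^ δ : ℝ) • f y) x
          - (jap x ^ δ : ℝ) • LP (⇑K) (⇑L) n f x) p volume
      ≤ (∫⁻ z, ψ n z ∂volume) * eLpNorm f p volume :=
        young_bound (ψ n) (hψm n) hp hf.1 hbb
    _ ≤ ENNReal.ofReal ((CK.toReal + CL.toReal + 1) * (dy n)⁻¹) * eLpNorm f p volume :=
        mul_le_mul_left hψbound _
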